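/- A 3×3 real invertible matrix A of the form A = P⁻¹·diag(−u,−u,v)·P with u, v > 0 and P real invertible, which can be written as A = SS' with S, S' symmetric real matrices both of signature (−,+,+), admits a real square root γ with S⁻¹γ symmetric. -/

import Mathlib

open Matrix

lemma key2 (m11 m12 m22 : ℝ) (hd : m11*m22 - m12^2 < 0) :
    ∃ y1 y2 y3 : ℝ, m11*y1 + 2*m12*y2 + m22*y3 = 0 ∧
      (m11*m22 - m12^2) * (y1*y3 - y2^2) = 1 := by
  have hpos : 0 < m12^2 - m11*m22 := by linarith
  set s := Real.sqrt (m12^2 - m11*m22) with hsdef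
  have hs2 : s^2 = m12^2 - m11*m22 := Real.sq_sqrt hpos.le
  have hs0 : 0 < s := Real.sqrt_pos.mpr hpos
  have hsne : s ≠ 0 := ne_of_gt hs0
  by_cases h11 : m11 = 0
  · subst h11
    by_cases h22 : m22 = 0
    · subst h22
      have hm : m12 ≠ 0 := by intro h; rw [h] at hd; norm_num at hd
      exact ⟨1, 0, 1/((0:ℝ)*0 - m12^2), by ring, by field_simp; ring⟩
    · refine ⟨0, 1/s, -2*m12/(s*m22), by field_simp; ring, ?_⟩
      field_simp
      linear_combination (-m22) * hs2
  · refine ⟨-2*m12/(s*m11), 1/s, 0, by field_simp; ring, ?_⟩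
    field_simp
    linear_combination (-m11) * hs2

lemma quadCongr (B C : Matrix (Fin 3) (Fin 3) ℝ) (x : Fin 3 → ℝ) :
    x ⬝ᵥ ((Cᵀ * B * C) *ᵥ x) = (C *ᵥ x) ⬝ᵥ (B *ᵥ (C *ᵥ x)) := by
  rw [← Matrix.mulVec_mulVec, ← Matrix.mulVec_mulVec, Matrix.dotProduct_mulVec x Cᵀ _,
    Matrix.vecMul_transpose]

set_option maxHeartbeats 2000000 in
theorem stmt_17 (u v : ℝ) (hu : 0 < u) (hv : 0 < v)
    (P A S S' : Matrix (Fin 3) (Fin 3) ℝ) (hP : IsUnit P.det)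
    (hA : A = P⁻¹ * Matrix.diagonal ![-u, -u, v] * P)
    (hAinv : IsUnit A.det)
    (hS : Sᵀ = S) (hSinv : IsUnit S.det)
    (hS' : S'ᵀ = S') (hS'inv : IsUnit S'.det)
    (hSsig : ∃ U : Matrix (Fin 3) (Fin 3) ℝ, IsUnit U.det ∧
      S = Uᵀ * Matrix.diagonal ![(-1 : ℝ), 1, 1] * U)
    (hS'sig : ∃ V : Matrix (Fin 3) (Fin 3) ℝ, IsUnit V.det ∧
      S' = Vᵀ * Matrix.diagonal ![(-1 : ℝ), 1, 1] * V)
    (hprod : A = S * S') :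
    ∃ γ : Matrix (Fin 3) (Fin 3) ℝ, γ * γ = A ∧ (S⁻¹ * γ)ᵀ = S⁻¹ * γ := by
  set D : Matrix (Fin 3) (Fin 3) ℝ := Matrix.diagonal ![-u, -u, v] with hD
  haveI : Invertible P := P.invertibleOfIsUnitDet hP
  haveI : Invertible S := S.invertibleOfIsUnitDet hSinv
  have hPT : IsUnit Pᵀ.det := by rwa [Matrix.det_transpose]
  haveI : Invertible Pᵀ := Pᵀ.invertibleOfIsUnitDet hPT
  set M : Matrix (Fin 3) (Fin 3) ℝ := P * S * Pᵀ with hM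
  have hMt : Mᵀ = M := by
    rw [hM]; simp [Matrix.transpose_mul, hS, Matrix.mul_assoc]
  -- S' = S⁻¹ * A
  have hS'eq : S' = S⁻¹ * A := by
    rw [hprod, ← Matrix.mul_assoc, Matrix.nonsing_inv_mul S hSinv, Matrix.one_mul]
  -- A * S = S * Aᵀ
  have hAS : A * S = S * Aᵀ := by
    rw [hprod, Matrix.transpose_mul, hS, ← Matrix.mul_assoc]
    rw [hS']
  have hDt : Dᵀ = D := by rw [hD]; exact Matrix.diagonal_transpose _
  -- M commutes with D
  have hMD : M * D = D * M := by
    have h1 : P * (A * S) * Pᵀ = P * (S * Aᵀ) * Pᵀ := by rw [hAS]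
    have hAe : P * A = D * P := by
      rw [hA, ← Matrix.mul_assoc, ← Matrix.mul_assoc, Matrix.mul_nonsing_inv P hP, Matrix.one_mul]
    have hAt : Aᵀ * Pᵀ = Pᵀ * D := by
      have := congrArg Matrix.transpose hAe
      simpa [Matrix.transpose_mul, hDt] using this
    calc M * D = P * S * (Pᵀ * D) := by rw [hM, Matrix.mul_assoc]
    _ = P * (S * (Aᵀ * Pᵀ)) := by rw [hAt, Matrix.mul_assoc]
    _ = P * (S * Aᵀ) * Pᵀ := by simp only [Matrix.mul_assoc]
    _ = P * (A * S) * Pᵀ := h1.symm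
    _ = (P * A) * S * Pᵀ := by simp only [Matrix.mul_assoc]
    _ = D * M := by rw [hAe, hM]; simp only [Matrix.mul_assoc]
  -- entries of M
  set m11 := M 0 0 with hm11
  set m12 := M 0 1 with hm12
  set m22 := M 1 1 with hm22
  set m33 := M 2 2 with hm33
  have hkey : ∀ i j, M i j * (![-u,-u,v] j) = (![-u,-u,v] i) * M i j := by
    intro i j
    have h := congrFun (congrFun hMD i) j
    rw [hD] at h
    simpa [Matrix.mul_diagonal, Matrix.diagonal_mul] using h
  have huv : v + u ≠ 0 := by positivity
  have hz02 : M 0 2 = 0 := by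
    have h := hkey 0 2; simp at h
    have h2 : M 0 2 * (v + u) = 0 := by linear_combination h
    exact (mul_eq_zero.mp h2).resolve_right huv
  have hz12 : M 1 2 = 0 := by
    have h := hkey 1 2; simp at h
    have h2 : M 1 2 * (v + u) = 0 := by linear_combination h
    exact (mul_eq_zero.mp h2).resolve_right huv
  have hz20 : M 2 0 = 0 := by
    have h := hkey 2 0; simp at h
    have h2 : M 2 0 * (v + u) = 0 := by linear_combination -h
    exact (mul_eq_zero.mp h2).resolve_right huv
  have hz21 : M 2 1 = 0 := by
    have h := hkey 2 1; simp at h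
    have h2 : M 2 1 * (v + u) = 0 := by linear_combination -h
    exact (mul_eq_zero.mp h2).resolve_right huv
  have hz10 : M 1 0 = m12 := by
    have h10 := congrFun (congrFun hMt 0) 1
    simpa [Matrix.transpose_apply] using h10
  have hMexp : M = !![m11, m12, 0; m12, m22, 0; 0, 0, m33] := by
    ext i j
    fin_cases i <;> fin_cases j <;>
      simp [hz02, hz12, hz20, hz21, hz10, hm11, hm12, hm22, hm33]
  -- determinants
  have hdetS : S.det < 0 := by
    obtain ⟨U, hU, hUeq⟩ := hSsig
    have hUne : U.det ≠ 0 := hU.ne_zero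
    have h1 : S.det = -(U.det^2) := by
      rw [hUeq]
      simp [Matrix.det_mul, Matrix.det_transpose, Matrix.det_diagonal, Fin.prod_univ_three]
      ring
    have : 0 < U.det^2 := by positivity
    linarith
  have hdetM : M.det = P.det^2 * S.det := by
    rw [hM]
    simp [Matrix.det_mul, Matrix.det_transpose]
    ring
  have hdetMe : M.det = (m11*m22 - m12^2) * m33 := by
    rw [hMexp]
    simp [Matrix.det_fin_three]
    ring
  set d2 := m11*m22 - m12^2 with hd2def
  have hPd2 : 0 < P.det^2 := by
    have : P.det ≠ 0 := hP.ne_zero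
    positivity
  have hdM : d2 * m33 < 0 := by
    rw [← hdetMe, hdetM]
    exact mul_neg_of_pos_of_neg hPd2 hdetS
  have hm33ne : m33 ≠ 0 := by
    intro h; rw [h, mul_zero] at hdM; exact lt_irrefl 0 hdM
  have hd2ne : d2 ≠ 0 := by
    intro h; rw [h, zero_mul] at hdM; exact lt_irrefl 0 hdM
  -- S in congruence form and S' = Pᵀ W P
  have hSC : S = ((Pᵀ)⁻¹)ᵀ * M * (Pᵀ)⁻¹ := by
    rw [Matrix.transpose_nonsing_inv, Matrix.transpose_transpose, hM]
    simp only [Matrix.mul_assoc]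
    rw [Matrix.inv_mul_cancel_left_of_invertible, Matrix.mul_inv_of_invertible, Matrix.mul_one]
  set W : Matrix (Fin 3) (Fin 3) ℝ :=
    !![-u*m22/d2, u*m12/d2, 0; u*m12/d2, -u*m11/d2, 0; 0, 0, v/m33] with hW
  have hMW : M * W = D := by
    rw [hMexp, hW, hD]
    ext i j
    fin_cases i <;> fin_cases j <;>
      simp [Matrix.mul_apply, Fin.sum_univ_three, Matrix.diagonal] <;>
      field_simp <;> ring
  have hS'W : S' = Pᵀ * W * P := by
    have h1 : S * (Pᵀ * W * P) = A := by
      rw [hSC, hA]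
      simp only [Matrix.mul_assoc]
      rw [Matrix.transpose_nonsing_inv, Matrix.transpose_transpose]
      rw [← Matrix.mul_assoc (Pᵀ)⁻¹ Pᵀ, Matrix.inv_mul_of_invertible, Matrix.one_mul]
      rw [← Matrix.mul_assoc M W, hMW]
    rw [hS'eq, ← h1, ← Matrix.mul_assoc, Matrix.nonsing_inv_mul S hSinv, Matrix.one_mul]
  -- the key sign fact
  have hd2neg : d2 < 0 := by
    by_contra hcon
    push_neg at hcon
    have hd2pos : 0 < d2 := lt_of_le_of_ne hcon (Ne.symm hd2ne)
    have hm33neg : m33 < 0 := by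
      rcases mul_neg_iff.mp hdM with ⟨_, h⟩ | ⟨h, _⟩
      · exact h
      · linarith
    have hm11ne : m11 ≠ 0 := by
      intro h
      rw [hd2def, h, zero_mul] at hd2pos
      nlinarith [sq_nonneg m12]
    rcases lt_or_gt_of_ne hm11ne with hm11neg | hm11pos
    · -- m11 < 0 : S is negative definite, contradict hSsig
      obtain ⟨U, hU, hUeq⟩ := hSsig
      haveI : Invertible U := U.invertibleOfIsUnitDet hU
      set x : Fin 3 → ℝ := U⁻¹ *ᵥ ![0,1,0] with hx
      have hUx : U *ᵥ x = ![0,1,0] := by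
        rw [hx, Matrix.mulVec_mulVec, Matrix.mul_inv_of_invertible, Matrix.one_mulVec]
      have hq1 : x ⬝ᵥ (S *ᵥ x) = 1 := by
        rw [hUeq, quadCongr, hUx]
        simp [Matrix.mulVec, dotProduct, Fin.sum_univ_three, Matrix.diagonal]
      set w : Fin 3 → ℝ := (Pᵀ)⁻¹ *ᵥ x with hw
      have hq2 : x ⬝ᵥ (S *ᵥ x) = w ⬝ᵥ (M *ᵥ w) := by
        rw [hSC, quadCongr]
      have hexp : w ⬝ᵥ (M *ᵥ w) =
          m11*(w 0)^2 + 2*m12*(w 0)*(w 1) + m22*(w 1)^2 + m33*(w 2)^2 := by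
        rw [hMexp]
        simp [Matrix.mulVec, dotProduct, Fin.sum_univ_three]
        ring
      rw [hq2, hexp] at hq1
      have hd2' : 0 < m11*m22 - m12^2 := hd2def ▸ hd2pos
      have h1 : (-m11) * (1:ℝ) ≤ 0 := by
        rw [← hq1]
        nlinarith [sq_nonneg (m11*(w 0) + m12*(w 1)),
          mul_nonneg hd2'.le (sq_nonneg (w 1)),
          mul_nonneg (mul_pos_of_neg_of_neg hm11neg hm33neg).le (sq_nonneg (w 2))]
      linarith
    · -- m11 > 0 : S' is negative definite, contradict hS'sig
      obtain ⟨V, hV, hVeq⟩ := hS'sig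
      haveI : Invertible V := V.invertibleOfIsUnitDet hV
      set y : Fin 3 → ℝ := V⁻¹ *ᵥ ![0,1,0] with hy
      have hVy : V *ᵥ y = ![0,1,0] := by
        rw [hy, Matrix.mulVec_mulVec, Matrix.mul_inv_of_invertible, Matrix.one_mulVec]
      have hq1 : y ⬝ᵥ (S' *ᵥ y) = 1 := by
        rw [hVeq, quadCongr, hVy]
        simp [Matrix.mulVec, dotProduct, Fin.sum_univ_three, Matrix.diagonal]
      set z : Fin 3 → ℝ := P *ᵥ y with hz
      have hq2 : y ⬝ᵥ (S' *ᵥ y) = z ⬝ᵥ (W *ᵥ z) := by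
        rw [hS'W, quadCongr]
      have hexp : z ⬝ᵥ (W *ᵥ z) =
          (-u/d2)*(m22*(z 0)^2 - 2*m12*(z 0)*(z 1) + m11*(z 1)^2) + (v/m33)*(z 2)^2 := by
        rw [hW]
        simp [Matrix.mulVec, dotProduct, Fin.sum_univ_three]
        field_simp
        ring
      rw [hq2, hexp] at hq1
      have hA1 : (-u/d2) < 0 := div_neg_of_neg_of_pos (neg_neg_iff_pos.mpr hu) hd2pos
      have hA2 : (v/m33) < 0 := div_neg_of_pos_of_neg hv hm33neg
      have hB : 0 ≤ m22*(z 0)^2 - 2*m12*(z 0)*(z 1) + m11*(z 1)^2 := by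
        nlinarith [sq_nonneg (m11*(z 1) - m12*(z 0)), sq_nonneg (z 0)]
      nlinarith [mul_nonneg (le_of_lt (neg_pos.mpr hA1)) hB, sq_nonneg (z 2)]
  -- construct the square root
  obtain ⟨y1, y2, y3, hL, hdet⟩ := key2 m11 m12 m22 (hd2def ▸ hd2neg)
  have hsu : Real.sqrt u * Real.sqrt u = u := Real.mul_self_sqrt hu.le
  have hsv : Real.sqrt v * Real.sqrt v = v := Real.mul_self_sqrt hv.le
  set Z : Matrix (Fin 3) (Fin 3) ℝ :=
    !![Real.sqrt u * y1, Real.sqrt u * y2, 0;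
       Real.sqrt u * y2, Real.sqrt u * y3, 0;
       0, 0, Real.sqrt v / m33] with hZ
  have hZt : Zᵀ = Z := by
    rw [hZ]; ext i j; fin_cases i <;> fin_cases j <;> simp
  have hMZ2 : (M * Z) * (M * Z) = D := by
    rw [hMexp, hZ, hD]
    ext i j
    fin_cases i <;> fin_cases j <;>
      simp [Matrix.mul_apply, Fin.sum_univ_three, Matrix.diagonal]
    · linear_combination (Real.sqrt u*Real.sqrt u*(m11*y1+m12*y2))*hL
        - (Real.sqrt u*Real.sqrt u)*hdet - hsu
    · linear_combination (Real.sqrt u*Real.sqrt u*(m11*y2+m12*y3))*hL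
    · linear_combination (Real.sqrt u*Real.sqrt u*(m12*y1+m22*y2))*hL
    · linear_combination (Real.sqrt u*Real.sqrt u*(m12*y2+m22*y3))*hL
        - (Real.sqrt u*Real.sqrt u)*hdet - hsu
    · field_simp
      linear_combination hsv
  set Γ : Matrix (Fin 3) (Fin 3) ℝ := M * Z with hΓ
  refine ⟨P⁻¹ * Γ * P, ?_, ?_⟩
  · rw [hA]
    simp only [Matrix.mul_assoc]
    rw [Matrix.mul_inv_cancel_left_of_invertible]
    rw [← Matrix.mul_assoc Γ Γ P, hMZ2]
  · have h1 : S * (Pᵀ * Z * P) = P⁻¹ * Γ * P := by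
      rw [hSC, hΓ]
      simp only [Matrix.mul_assoc]
      rw [Matrix.transpose_nonsing_inv, Matrix.transpose_transpose]
      rw [← Matrix.mul_assoc (Pᵀ)⁻¹ Pᵀ, Matrix.inv_mul_of_invertible, Matrix.one_mul]
    have hKey : S⁻¹ * (P⁻¹ * Γ * P) = Pᵀ * Z * P := by
      rw [← h1, ← Matrix.mul_assoc, Matrix.nonsing_inv_mul S hSinv, Matrix.one_mul]
    rw [hKey, Matrix.transpose_mul, Matrix.transpose_mul, Matrix.transpose_transpose, hZt]
    simp only [Matrix.mul_assoc]
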